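/- For every nontrivial connected graph G, ir(G) ≤ γ(G) ≤ 2·ir(G) − 1, where ir(G) is the irredundance number and γ(G) is the domination number. -/

import Mathlib

/-- `S` is a dominating set of `G`. -/
def IsDom {V : Type*} (G : SimpleGraph V) (S : Set V) : Prop :=
  ∀ v, v ∈ S ∨ ∃ u ∈ S, G.Adj u v

/-- The private neighbourhood `pn[v, S] = N[v] − N[S − {v}]` of `v` with respect to `S`. -/
def privNbhd {V : Type*} (G : SimpleGraph V) (v : V) (S : Set V) : Set V :=
  {u | u = v ∨ G.Adj v u} \ {u | ∃ w ∈ S \ {v}, u = w ∨ G.Adj w u}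

/-- `S` is an irredundant set of `G`. -/
def IsIrr {V : Type*} (G : SimpleGraph V) (S : Set V) : Prop :=
  ∀ v ∈ S, (privNbhd G v S).Nonempty

/-- `S` is a maximal irredundant set of `G`. -/
def IsMaxIrr {V : Type*} (G : SimpleGraph V) (S : Set V) : Prop :=
  IsIrr G S ∧ ∀ T, S ⊂ T → ¬ IsIrr G T

section aux

variable {V : Type*}

lemma mem_privNbhd {G : SimpleGraph V} {p v : V} {S : Set V} :
    p ∈ privNbhd G v S ↔ (p = v ∨ G.Adj v p) ∧ ∀ w ∈ S, w ≠ v → ¬(p = w ∨ G.Adj w p) := by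
  simp only [privNbhd, Set.mem_diff, Set.mem_setOf_eq, Set.mem_singleton_iff]
  constructor
  · rintro ⟨h1, h2⟩
    refine ⟨h1, fun w hw hne hp => h2 ⟨w, ⟨hw, hne⟩, hp⟩⟩
  · rintro ⟨h1, h2⟩
    refine ⟨h1, ?_⟩
    rintro ⟨w, ⟨hw, hne⟩, hp⟩
    exact h2 w hw hne hp

/-- Self private neighbour for an undominated vertex. -/
lemma self_pn (G : SimpleGraph V) {X : Set V} {v : V} (hv : ∀ x ∈ X, ¬(v = x ∨ G.Adj x v)) :
    v ∈ privNbhd G v (insert v X) := by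
  rw [mem_privNbhd]
  refine ⟨Or.inl rfl, fun w hw hne h => ?_⟩
  rcases Set.mem_insert_iff.mp hw with rfl | hwX
  · exact hne rfl
  · exact hv w hwX h

/-- Maximality: if `w ∉ X` would keep a private neighbour, then some `s ∈ X` has all its
private neighbours inside `N[w]`. -/
lemma exists_covered (G : SimpleGraph V) {X : Set V} (hX : IsMaxIrr G X) {w : V} (hw : w ∉ X)
    (hwpn : (privNbhd G w (insert w X)).Nonempty) :
    ∃ s ∈ X, ∀ p ∈ privNbhd G s X, p = w ∨ G.Adj w p := by
  have hss : X ⊂ insert w X := Set.ssubset_insert hw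
  have hnirr := hX.2 _ hss
  rw [IsIrr] at hnirr
  push_neg at hnirr
  obtain ⟨s, hs, hspn⟩ := hnirr
  rcases Set.mem_insert_iff.mp hs with rfl | hsX
  · rw [hspn] at hwpn
    exact absurd hwpn (by simp)
  · refine ⟨s, hsX, fun p hp => ?_⟩
    have hps : p ∉ privNbhd G s (insert w X) := by rw [hspn]; exact Set.notMem_empty p
    rw [mem_privNbhd] at hp hps
    push_neg at hps
    obtain ⟨hp1, hp2⟩ := hp
    obtain ⟨z, hz, hzs, hzp⟩ := hps hp1
    rcases Set.mem_insert_iff.mp hz with rfl | hzX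
    · exact hzp
    · exact absurd hzp (hp2 z hzX hzs)

lemma maxirr_nonempty (G : SimpleGraph V) [Nonempty V] {X : Set V} (hX : IsMaxIrr G X) :
    X.Nonempty := by
  rw [Set.nonempty_iff_ne_empty]
  rintro rfl
  obtain ⟨v⟩ := ‹Nonempty V›
  refine hX.2 {v} (Set.empty_ssubset.mpr (Set.singleton_nonempty v)) ?_
  intro w hw
  rw [Set.mem_singleton_iff] at hw
  subst hw
  refine ⟨w, mem_privNbhd.mpr ⟨Or.inl rfl, fun z hz hne _ => ?_⟩⟩
  rw [Set.mem_singleton_iff] at hz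
  exact hne hz

/-- A cardinality-minimal dominating set is maximal irredundant. -/
lemma minimal_dom_maxirr (G : SimpleGraph V) {D : Set V} (hD : IsDom G D)
    (hmin : ∀ T, T ⊂ D → ¬IsDom G T) : IsMaxIrr G D := by
  constructor
  · intro v hv
    have hsub : D \ {v} ⊂ D := Set.sdiff_singleton_ssubset.mpr hv
    have hnd := hmin _ hsub
    rw [IsDom] at hnd
    push_neg at hnd
    obtain ⟨w, hw1, hw2⟩ := hnd
    rcases hD w with hwD | ⟨u, huD, hu⟩
    · have hwv : w = v := by
        by_contra hne
        exact hw1 ⟨hwD, hne⟩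
      refine ⟨v, mem_privNbhd.mpr ⟨Or.inl rfl, fun z hzD hzv h => ?_⟩⟩
      rcases h with h | h
      · exact hzv h.symm
      · exact hw2 z ⟨hzD, hzv⟩ (by rw [hwv]; exact h)
    · have huv : u = v := by
        by_contra hne
        exact hw2 u ⟨huD, hne⟩ hu
      have hvw : G.Adj v w := huv ▸ hu
      have hwnD : w ∉ D := by
        intro hwD
        have hwv : w = v := by
          by_contra hne
          exact hw1 ⟨hwD, hne⟩
        exact G.loopless.irrefl v (hwv ▸ hvw)
      refine ⟨w, mem_privNbhd.mpr ⟨Or.inr hvw, fun z hzD hzv h => ?_⟩⟩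
      rcases h with h | h
      · exact hwnD (h ▸ hzD)
      · exact hw2 z ⟨hzD, hzv⟩ h
  · intro T hT hirr
    obtain ⟨t, htT, htD⟩ := Set.exists_of_ssubset hT
    obtain ⟨p, hp⟩ := hirr t htT
    rw [mem_privNbhd] at hp
    rcases hD p with hpD | ⟨u, huD, hu⟩
    · exact hp.2 p (hT.1 hpD) (fun h => htD (h ▸ hpD)) (Or.inl rfl)
    · exact hp.2 u (hT.1 huD) (fun h => htD (h ▸ huD)) (Or.inr hu)

/-- Main construction: from a maximal irredundant set we get a dominating set of size
at most `2k - 1`. -/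
lemma maxirr_dom (G : SimpleGraph V) [Fintype V] {X : Set V} (hX : IsMaxIrr G X)
    (hXne : X.Nonempty) :
    ∃ D : Set V, IsDom G D ∧ D.ncard ≤ 2 * X.ncard - 1 := by
  classical
  have hk : 1 ≤ X.ncard := (Set.ncard_pos (Set.toFinite X)).mpr hXne
  by_cases hdom : IsDom G X
  · exact ⟨X, hdom, by omega⟩
  · rw [IsDom] at hdom
    push_neg at hdom
    obtain ⟨u₀, hu₀X, hu₀adj⟩ := hdom
    have hu₀ : ∀ x ∈ X, ¬(u₀ = x ∨ G.Adj x u₀) := by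
      rintro x hx (rfl | h)
      · exact hu₀X hx
      · exact hu₀adj x hx h
    have hu₀nX : u₀ ∉ X := hu₀X
    -- choice of private neighbours
    let F : V → V := fun x => if h : (privNbhd G x X).Nonempty then h.choose else x
    have hF : ∀ x ∈ X, F x ∈ privNbhd G x X := by
      intro x hx
      have h := hX.1 x hx
      simp only [F, dif_pos h]
      exact h.choose_spec
    -- x₀
    obtain ⟨x₀, hx₀X, hx₀⟩ := exists_covered G hX hu₀nX ⟨u₀, self_pn G hu₀⟩
    obtain ⟨q₀, hq₀⟩ := hX.1 x₀ hx₀X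
    have hq₀N : q₀ = x₀ ∨ G.Adj x₀ q₀ := (mem_privNbhd.mp hq₀).1
    have hadj : G.Adj u₀ q₀ := by
      rcases hx₀ q₀ hq₀ with h | h
      · exact absurd (h ▸ hq₀N) (hu₀ x₀ hx₀X)
      · exact h
    have hq₀nX : q₀ ∉ X := fun h => hu₀ q₀ h (Or.inr hadj.symm)
    -- s₀
    have hq₀pn : (privNbhd G q₀ (insert q₀ X)).Nonempty := by
      refine ⟨u₀, mem_privNbhd.mpr ⟨Or.inr hadj.symm, fun w hw hne h => ?_⟩⟩
      rcases Set.mem_insert_iff.mp hw with rfl | hwX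
      · exact hne rfl
      · exact hu₀ w hwX h
    obtain ⟨s₀, hs₀X, hs₀⟩ := exists_covered G hX hq₀nX hq₀pn
    -- the dominating set
    refine ⟨(X \ {s₀}) ∪ insert q₀ (F '' (X \ {x₀})), ?_, ?_⟩
    · intro v
      by_cases hvN : ∃ x ∈ X, v = x ∨ G.Adj x v
      · obtain ⟨x, hxX, hvx⟩ := hvN
        by_cases hxs : x = s₀
        · subst hxs
          by_cases hvpn : v ∈ privNbhd G x X
          · rcases hs₀ v hvpn with rfl | h
            · exact Or.inl (Or.inr (Set.mem_insert v _))
            · exact Or.inr ⟨q₀, Or.inr (Set.mem_insert q₀ _), h⟩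
          · rw [mem_privNbhd] at hvpn
            push_neg at hvpn
            obtain ⟨z, hzX, hzs, hzv⟩ := hvpn hvx
            rcases hzv with rfl | h
            · exact Or.inl (Or.inl ⟨hzX, hzs⟩)
            · exact Or.inr ⟨z, Or.inl ⟨hzX, hzs⟩, h⟩
        · rcases hvx with rfl | h
          · exact Or.inl (Or.inl ⟨hxX, hxs⟩)
          · exact Or.inr ⟨x, Or.inl ⟨hxX, hxs⟩, h⟩
      · have hvN' : ∀ x ∈ X, ¬(v = x ∨ G.Adj x v) := fun x hx h => hvN ⟨x, hx, h⟩
        have hvnX : v ∉ X := fun h => hvN' v h (Or.inl rfl)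
        obtain ⟨x₁, hx₁X, hx₁⟩ := exists_covered G hX hvnX ⟨v, self_pn G hvN'⟩
        by_cases hx₁x₀ : x₁ = x₀
        · subst hx₁x₀
          rcases hx₁ q₀ hq₀ with h | h
          · exact absurd (h ▸ hq₀N) (hvN' x₁ hx₁X)
          · exact Or.inr ⟨q₀, Or.inr (Set.mem_insert q₀ _), h.symm⟩
        · have hFm : F x₁ ∈ privNbhd G x₁ X := hF x₁ hx₁X
          rcases hx₁ (F x₁) hFm with h | h
          · exact absurd (h ▸ (mem_privNbhd.mp hFm).1) (hvN' x₁ hx₁X)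
          · exact Or.inr ⟨F x₁, Or.inr (Set.mem_insert_of_mem _ ⟨x₁, ⟨hx₁X, hx₁x₀⟩, rfl⟩),
              h.symm⟩
    · have h1 : (X \ {s₀}).ncard = X.ncard - 1 := Set.ncard_diff_singleton_of_mem hs₀X
      have h2 : (F '' (X \ {x₀})).ncard ≤ (X \ {x₀}).ncard := Set.ncard_image_le
      have h3 : (X \ {x₀}).ncard = X.ncard - 1 := Set.ncard_diff_singleton_of_mem hx₀X
      have h4 : (insert q₀ (F '' (X \ {x₀}))).ncard ≤ (F '' (X \ {x₀})).ncard + 1 :=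
        Set.ncard_insert_le q₀ _
      have h5 := Set.ncard_union_le (X \ {s₀}) (insert q₀ (F '' (X \ {x₀})))
      omega

lemma exists_maxirr (G : SimpleGraph V) [Fintype V] : ∃ S : Set V, IsMaxIrr G S := by
  classical
  have hAne : Set.Nonempty {n : ℕ | ∃ S : Set V, IsIrr G S ∧ S.ncard = n} :=
    ⟨0, ∅, fun v hv => absurd hv (Set.notMem_empty v), Set.ncard_empty V⟩
  have hAbdd : BddAbove {n : ℕ | ∃ S : Set V, IsIrr G S ∧ S.ncard = n} := by
    refine ⟨(Set.univ : Set V).ncard, ?_⟩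
    rintro n ⟨S, _, rfl⟩
    exact Set.ncard_le_ncard (Set.subset_univ S) Set.finite_univ
  obtain ⟨S, hSirr, hS⟩ := Nat.sSup_mem hAne hAbdd
  refine ⟨S, hSirr, fun T hT hTirr => ?_⟩
  have h1 : T.ncard ≤ sSup {n : ℕ | ∃ S : Set V, IsIrr G S ∧ S.ncard = n} :=
    le_csSup hAbdd ⟨T, hTirr, rfl⟩
  have h2 : S.ncard < T.ncard := Set.ncard_lt_ncard hT (Set.toFinite T)
  omega

end aux

theorem stmt17 {V : Type*} [Fintype V] (G : SimpleGraph V)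
    (hconn : G.Connected) (hnontrivial : 1 < Fintype.card V) :
    sInf {n : ℕ | ∃ S : Set V, IsMaxIrr G S ∧ S.ncard = n} ≤
      sInf {n : ℕ | ∃ S : Set V, IsDom G S ∧ S.ncard = n} ∧
    sInf {n : ℕ | ∃ S : Set V, IsDom G S ∧ S.ncard = n} ≤
      2 * sInf {n : ℕ | ∃ S : Set V, IsMaxIrr G S ∧ S.ncard = n} - 1 := by
  classical
  have hVne : Nonempty V := Fintype.card_pos_iff.mp (by omega)
  have hdomne : Set.Nonempty {n : ℕ | ∃ S : Set V, IsDom G S ∧ S.ncard = n} :=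
    ⟨(Set.univ : Set V).ncard, Set.univ, fun v => Or.inl (Set.mem_univ v), rfl⟩
  obtain ⟨D₀, hD₀dom, hD₀⟩ := Nat.sInf_mem hdomne
  have hD₀min : ∀ T, T ⊂ D₀ → ¬ IsDom G T := by
    intro T hT hTdom
    have h1 : sInf {n : ℕ | ∃ S : Set V, IsDom G S ∧ S.ncard = n} ≤ T.ncard :=
      Nat.sInf_le ⟨T, hTdom, rfl⟩
    have h2 : T.ncard < D₀.ncard := Set.ncard_lt_ncard hT (Set.toFinite D₀)
    omega
  have hD₀irr := minimal_dom_maxirr G hD₀dom hD₀min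
  have hirrne : Set.Nonempty {n : ℕ | ∃ S : Set V, IsMaxIrr G S ∧ S.ncard = n} := by
    obtain ⟨S, hS⟩ := exists_maxirr G
    exact ⟨S.ncard, S, hS, rfl⟩
  constructor
  · exact Nat.sInf_le ⟨D₀, hD₀irr, hD₀⟩
  · obtain ⟨X, hXmax, hXcard⟩ := Nat.sInf_mem hirrne
    obtain ⟨D, hDdom, hDle⟩ := maxirr_dom G hXmax (maxirr_nonempty G hXmax)
    have h1 : sInf {n : ℕ | ∃ S : Set V, IsDom G S ∧ S.ncard = n} ≤ D.ncard :=
      Nat.sInf_le ⟨D, hDdom, rfl⟩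
    omega
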